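/- Let h be the 11-uniform morphism on {0,1,2,3} defined by h(0) = 01312021310, h(1) = 12023132021, h(2) = 23130203132, h(3) = 30201310203, and let h^ω(0) be its infinite fixed point starting from 0. Every factor of h^ω(0) that has length p and period q with p/q = 3/2 has length of the form a·11^i for some i ≥ 0 and some a ∈ {3, 6, 9, 12}. -/

import Mathlib

set_option maxRecDepth 40000
set_option maxHeartbeats 2000000


/-- A word `x` has period `q` (with `1 ≤ q ≤ |x|`) if `x[i] = x[i+q]`
whenever both indices are in range. -/
def HasPeriod {A : Type*} (x : List A) (q : ℕ) : Prop :=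
  1 ≤ q ∧ q ≤ x.length ∧ ∀ i : ℕ, i + q < x.length → x[i]? = x[i + q]?

/-- `w` contains an `e`-power: a nonempty factor of length `p` with period `q`
and `p/q ≥ e`. -/
def ContainsPowGe {A : Type*} (w : List A) (e : ℚ) : Prop :=
  ∃ x : List A, ∃ q : ℕ, x ≠ [] ∧ x <:+: w ∧ HasPeriod x q ∧
    e ≤ (x.length : ℚ) / (q : ℚ)

/-- `w` contains an `e⁺`-power: a nonempty factor of length `p` with period `q`
and `p/q > e`. -/
def ContainsPowGt {A : Type*} (w : List A) (e : ℚ) : Prop :=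
  ∃ x : List A, ∃ q : ℕ, x ≠ [] ∧ x <:+: w ∧ HasPeriod x q ∧
    e < (x.length : ℚ) / (q : ℚ)

/-- The critical exponent of `w` is exactly `e`: some nonempty factor has
exponent at least `e`, and no nonempty factor has exponent exceeding `e`. -/
def CritExpIs {A : Type*} (w : List A) (e : ℚ) : Prop :=
  ContainsPowGe w e ∧ ¬ ContainsPowGt w e

/-- The 11-uniform palindromic morphism on {0,1,2,3}. -/
def hmor : List (Fin 4) → List (Fin 4) :=
  fun w => w.flatMap (fun a =>
    if a = 0 then [0, 1, 3, 1, 2, 0, 2, 1, 3, 1, 0]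
    else if a = 1 then [1, 2, 0, 2, 3, 1, 3, 2, 0, 2, 1]
    else if a = 2 then [2, 3, 1, 3, 0, 2, 0, 3, 1, 3, 2]
    else [3, 0, 2, 0, 1, 3, 1, 0, 2, 0, 3])

namespace HmorAux

def Him : Fin 4 → List (Fin 4) := fun a =>
  if a = 0 then [0, 1, 3, 1, 2, 0, 2, 1, 3, 1, 0]
  else if a = 1 then [1, 2, 0, 2, 3, 1, 3, 2, 0, 2, 1]
  else if a = 2 then [2, 3, 1, 3, 0, 2, 0, 3, 1, 3, 2]
  else [3, 0, 2, 0, 1, 3, 1, 0, 2, 0, 3]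

def W2 : Fin 4 → List (Fin 4) := fun a =>
  if a = 0 then [0,1,3,1,2,0,2,1,3,1,0,1,2,0,2,3,1,3,2,0,2,1,3,0,2,0,1,3,1,0,2,0,3,1,2,0,2,3,1,3,2,0,2,1,2,3,1,3,0,2,0,3,1,3,2,0,1,3,1,2,0,2,1,3,1,0,2,3,1,3,0,2,0,3,1,3,2,1,2,0,2,3,1,3,2,0,2,1,3,0,2,0,1,3,1,0,2,0,3,1,2,0,2,3,1,3,2,0,2,1,0,1,3,1,2,0,2,1,3,1,0]
  else if a = 1 then [1,2,0,2,3,1,3,2,0,2,1,2,3,1,3,0,2,0,3,1,3,2,0,1,3,1,2,0,2,1,3,1,0,2,3,1,3,0,2,0,3,1,3,2,3,0,2,0,1,3,1,0,2,0,3,1,2,0,2,3,1,3,2,0,2,1,3,0,2,0,1,3,1,0,2,0,3,2,3,1,3,0,2,0,3,1,3,2,0,1,3,1,2,0,2,1,3,1,0,2,3,1,3,0,2,0,3,1,3,2,1,2,0,2,3,1,3,2,0,2,1]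
  else if a = 2 then [2,3,1,3,0,2,0,3,1,3,2,3,0,2,0,1,3,1,0,2,0,3,1,2,0,2,3,1,3,2,0,2,1,3,0,2,0,1,3,1,0,2,0,3,0,1,3,1,2,0,2,1,3,1,0,2,3,1,3,0,2,0,3,1,3,2,0,1,3,1,2,0,2,1,3,1,0,3,0,2,0,1,3,1,0,2,0,3,1,2,0,2,3,1,3,2,0,2,1,3,0,2,0,1,3,1,0,2,0,3,2,3,1,3,0,2,0,3,1,3,2]
  else [3,0,2,0,1,3,1,0,2,0,3,0,1,3,1,2,0,2,1,3,1,0,2,3,1,3,0,2,0,3,1,3,2,0,1,3,1,2,0,2,1,3,1,0,1,2,0,2,3,1,3,2,0,2,1,3,0,2,0,1,3,1,0,2,0,3,1,2,0,2,3,1,3,2,0,2,1,0,1,3,1,2,0,2,1,3,1,0,2,3,1,3,0,2,0,3,1,3,2,0,1,3,1,2,0,2,1,3,1,0,3,0,2,0,1,3,1,0,2,0,3]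

def NA : Fin 4 → ℕ := fun a =>
  if a = 0 then 815464897577532772803551703439564870101887353103744695496281985024221812
  else if a = 1 then 2729441370973650698131041686393216097520007005262625304301854269545953161
  else if a = 2 then 5055904587684433415205480738484447595813078593529285543824286540551276766
  else 5533965661991457750526305877626119563184898223109296121350426815219506467

def Np (b c : Fin 4) : ℕ := NA b + 4 ^ 121 * NA c

lemma W2_eq : ∀ a : Fin 4, W2 a = (Him a).flatMap Him := by decide

lemma Hlen : ∀ a : Fin 4, (Him a).length = 11 := by decide
lemma W2len : ∀ a : Fin 4, (W2 a).length = 121 := by decide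
lemma Hfirst : ∀ a : Fin 4, (Him a).getD 0 0 = a := by decide
lemma Hadj : ∀ a : Fin 4, ∀ s < 10, (Him a).getD s 0 ≠ (Him a).getD (s+1) 0 := by decide
lemma Hlast : ∀ a : Fin 4, (Him a).getD 10 0 = a := by decide

lemma sync : ∀ a b c : Fin 4, b ≠ c → ∀ t < 11, 0 < t →
    ∃ s < 11, (Him a).getD s 0 ≠ (Him b ++ Him c).getD (t+s) 0 := by decide

lemma digit_eq : ∀ b c : Fin 4, ∀ t < 242,
    ((W2 b ++ W2 c).getD t 0 : Fin 4).val = Np b c / 4 ^ t % 4 := by decide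

lemma base_check : ∀ b c : Fin 4, b ≠ c → ∀ k < 21, 5 ≤ k → k ≠ 11 → ∀ r < 121,
    Np b c / 4 ^ r % 4 ^ k ≠ Np b c / 4 ^ (r + 2 * k) % 4 ^ k := by decide



lemma hmor_eq (l : List (Fin 4)) : hmor l = l.flatMap Him := rfl

lemma flatMap_getD (l : List (Fin 4)) (m s : ℕ) (hm : m < l.length) (hs : s < 11) :
    (l.flatMap Him).getD (11 * m + s) 0 = (Him (l.getD m 0)).getD s 0 := by
  induction l generalizing m with
  | nil => simp at hm
  | cons a t ih =>
    cases m with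
    | zero =>
      simp only [List.flatMap_cons, Nat.mul_zero, Nat.zero_add, List.getD_cons_zero]
      rw [List.getD_append _ _ _ _ (by rw [Hlen]; exact hs)]
    | succ m =>
      have h11 : (Him a).length ≤ 11 * (m+1) + s := by rw [Hlen]; omega
      simp only [List.flatMap_cons, List.getD_cons_succ]
      rw [List.getD_append_right _ _ _ _ h11, Hlen]
      have : 11 * (m + 1) + s - 11 = 11 * m + s := by omega
      rw [this]
      exact ih m (by simpa using hm)

lemma dig_mod : ∀ (k : ℕ) (M1 M2 : ℕ),
    (∀ j < k, M1 / 4 ^ j % 4 = M2 / 4 ^ j % 4) → M1 % 4 ^ k = M2 % 4 ^ k := by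
  intro k
  induction k with
  | zero => intro M1 M2 _; simp [Nat.mod_one]
  | succ k ih =>
    intro M1 M2 h
    have e1 : (4:ℕ) ^ (k+1) = 4 ^ k * 4 := by ring
    rw [e1, Nat.mod_mul, Nat.mod_mul, ih M1 M2 (fun j hj => h j (by omega)), h k (by omega)]

section W
variable (W : ℕ → Fin 4) (hW : ∀ n : ℕ, (List.range (11 ^ n)).map W = (hmor^[n]) [0])

lemma prefix_getD (i M : ℕ) (h : i < M) : ((List.range M).map W).getD i 0 = W i := by
  rw [List.getD_eq_getElem?_getD, List.getElem?_map, List.getElem?_range h]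
  rfl

/-- The abstract statement: a window of length `3k` with period `2k`. -/
def QP (k : ℕ) : Prop := ∃ i, ∀ j < k, W (i + j) = W (i + j + 2 * k)

include hW

lemma Wb (m s : ℕ) (hs : s < 11) : W (11 * m + s) = (Him (W m)).getD s 0 := by
  have hm : m < 11 ^ (m + 1) :=
    lt_of_lt_of_le (Nat.lt_pow_self (n := m) (by norm_num))
      (Nat.pow_le_pow_right (by norm_num) (by omega))
  have hidx : 11 * m + s < 11 ^ (m + 2) := by
    have h1 : m + 1 ≤ 11 ^ m := Nat.lt_pow_self (n := m) (by norm_num)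
    have h2 : 11 * (m + 1) ≤ 11 * 11 ^ m := by omega
    have h3 : (11:ℕ) * 11 ^ m ≤ 11 ^ (m + 2) := by
      rw [pow_succ, pow_succ]; nlinarith [Nat.one_le_two_pow (n := m)]
    omega
  have e1 := hW (m + 2)
  rw [Function.iterate_succ_apply', ← hW (m + 1), hmor_eq] at e1
  calc W (11 * m + s) = ((List.range (11 ^ (m+2))).map W).getD (11 * m + s) 0 :=
        (prefix_getD W _ _ hidx).symm
    _ = (((List.range (11 ^ (m+1))).map W).flatMap Him).getD (11 * m + s) 0 := by rw [e1]
    _ = (Him (((List.range (11 ^ (m+1))).map W).getD m 0)).getD s 0 :=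
        flatMap_getD _ m s (by simpa using hm) hs
    _ = (Him (W m)).getD s 0 := by rw [prefix_getD W _ _ hm]

lemma Wfix (m : ℕ) : W (11 * m) = W m := by
  have := Wb W hW m 0 (by norm_num)
  rw [Nat.add_zero] at this
  rw [this, Hfirst]

lemma Wadj : ∀ n, W n ≠ W (n + 1) := by
  intro n
  induction n using Nat.strong_induction_on with
  | _ n ih =>
    have hn : n = 11 * (n / 11) + n % 11 := by omega
    set m := n / 11 with hmdef
    set s := n % 11 with hsdef
    by_cases hs : s < 10
    · rw [hn, Wb W hW m s (by omega), show 11 * m + s + 1 = 11 * m + (s+1) by omega,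
        Wb W hW m (s+1) (by omega)]
      exact Hadj _ s hs
    · have hs10 : s = 10 := by omega
      have h1 : W n = W m := by rw [hn, hs10, Wb W hW m 10 (by norm_num), Hlast]
      have h2 : W (n + 1) = W (m + 1) := by
        rw [show n + 1 = 11 * (m + 1) + 0 by omega, Wb W hW (m+1) 0 (by norm_num), Hfirst]
      rw [h1, h2]
      exact ih m (by omega)

lemma Wb2 (m t : ℕ) (ht : t < 121) : W (121 * m + t) = ((Him (W m)).flatMap Him).getD t 0 := by
  rw [show 121 * m + t = 11 * (11 * m + t / 11) + t % 11 by omega,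
    Wb W hW _ _ (by omega), Wb W hW m (t / 11) (by omega),
    ← flatMap_getD (Him (W m)) (t / 11) (t % 11) (by rw [Hlen]; omega) (by omega)]
  congr 1
  omega

lemma sync11 (k : ℕ) (hk : 21 ≤ k) (h : QP W k) : k % 11 = 0 := by
  obtain ⟨i, hper⟩ := h
  set m := (i + 10) / 11 with hmdef
  by_contra ht0
  set t := (2 * k) % 11 with htdef
  set n := m + (2 * k) / 11 with hndef
  obtain ⟨s, hs, hne⟩ := sync (W m) (W n) (W (n+1)) (Wadj W hW n) t (by omega) (by omega)
  apply hne
  rw [← Wb W hW m s hs]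
  have hj : 11 * m + s = i + (11 * m + s - i) := by omega
  rw [hj, hper _ (by omega), show i + (11 * m + s - i) + 2 * k = 11 * n + (t + s) by omega]
  by_cases hts : t + s < 11
  · rw [Wb W hW n (t+s) hts, List.getD_append _ _ _ _ (by rw [Hlen]; exact hts)]
  · rw [show 11 * n + (t + s) = 11 * (n+1) + (t + s - 11) by omega,
      Wb W hW (n+1) (t + s - 11) (by omega),
      List.getD_append_right _ _ _ _ (by rw [Hlen]; omega), Hlen]

lemma liftQP (k : ℕ) (hd : k % 11 = 0) (h : QP W k) : QP W (k / 11) := by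
  obtain ⟨i, hper⟩ := h
  refine ⟨(i + 10) / 11, fun j hj => ?_⟩
  set i' := (i + 10) / 11 with hi'
  set k' := k / 11 with hk'
  have hk11 : k = 11 * k' := by omega
  rw [← Wfix W hW (i' + j), ← Wfix W hW (i' + j + 2 * k')]
  rw [show 11 * (i' + j) = i + (11 * (i' + j) - i) by omega,
    hper _ (by omega)]
  congr 1
  omega

lemma baseQP (k : ℕ) (h5 : 5 ≤ k) (h20 : k ≤ 20) (h11 : k ≠ 11) : ¬ QP W k := by
  rintro ⟨i, hper⟩
  set m := i / 121 with hmdef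
  set r := i % 121 with hrdef
  have hL : ∀ t < 242, W (121 * m + t) = (W2 (W m) ++ W2 (W (m+1))).getD t 0 := by
    intro t ht
    by_cases h : t < 121
    · rw [Wb2 W hW m t h, ← W2_eq,
        List.getD_append _ _ _ _ (by rw [W2len]; exact h)]
    · rw [show 121 * m + t = 121 * (m+1) + (t - 121) by omega,
        Wb2 W hW (m+1) _ (by omega), ← W2_eq,
        List.getD_append_right _ _ _ _ (by rw [W2len]; omega), W2len]
  have hdig : ∀ j < k, Np (W m) (W (m+1)) / 4 ^ (r + j) % 4
      = Np (W m) (W (m+1)) / 4 ^ (r + j + 2 * k) % 4 := by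
    intro j hj
    rw [← digit_eq (W m) (W (m+1)) (r + j) (by omega),
      ← digit_eq (W m) (W (m+1)) (r + j + 2 * k) (by omega),
      ← hL (r + j) (by omega), ← hL (r + j + 2 * k) (by omega),
      show 121 * m + (r + j) = i + j by omega,
      show 121 * m + (r + j + 2 * k) = i + j + 2 * k by omega,
      hper j hj]
  apply base_check (W m) (W (m+1)) (Wadj W hW m) k (by omega) h5 h11 r (by omega)
  apply dig_mod
  intro j hj
  rw [Nat.div_div_eq_div_mul, Nat.div_div_eq_div_mul, ← pow_add, ← pow_add,
    show r + 2 * k + j = r + j + 2 * k by omega]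
  exact hdig j hj

lemma mainQP : ∀ k, 1 ≤ k → QP W k →
    ∃ i a : ℕ, (a = 1 ∨ a = 2 ∨ a = 3 ∨ a = 4) ∧ k = a * 11 ^ i := by
  intro k
  induction k using Nat.strong_induction_on with
  | _ k ih =>
    intro hk1 hq
    by_cases h4 : k ≤ 4
    · exact ⟨0, k, by omega, by simp⟩
    by_cases h20 : k ≤ 20
    · by_cases h11 : k = 11
      · exact ⟨1, 1, Or.inl rfl, by omega⟩
      · exact absurd hq (baseQP W hW k (by omega) h20 h11)
    · have hdvd : k % 11 = 0 := sync11 W hW k (by omega) hq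
      have hq' := liftQP W hW k hdvd hq
      obtain ⟨i, a, ha, he⟩ := ih (k / 11) (by omega) (by omega) hq'
      refine ⟨i + 1, a, ha, ?_⟩
      have : k = 11 * (k / 11) := by omega
      rw [this, he, pow_succ]
      ring

end W
end HmorAux

/-- In the fixed point -/
theorem hmor_fixed_point_32_powers_lengths (W : ℕ → Fin 4)
    (hW : ∀ n : ℕ, (List.range (11 ^ n)).map W = (hmor^[n]) [0]) :
    ∀ x : List (Fin 4),
      (∃ i : ℕ, x = (List.range x.length).map (fun j => W (i + j))) →
      ∀ q : ℕ, HasPeriod x q → (x.length : ℚ) / (q : ℚ) = 3 / 2 →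
      ∃ i a : ℕ, (a = 3 ∨ a = 6 ∨ a = 9 ∨ a = 12) ∧ x.length = a * 11 ^ i := by
  rintro x ⟨i, hx⟩ q ⟨hq1, hq2, hper⟩ hexp
  have hq0 : (q : ℚ) ≠ 0 := Nat.cast_ne_zero.mpr (by omega)
  rw [div_eq_div_iff hq0 (by norm_num)] at hexp
  have h23 : x.length * 2 = 3 * q := by exact_mod_cast hexp
  set k := x.length - q with hk
  have hplen : x.length = 3 * k := by omega
  have hq2k : q = 2 * k := by omega
  have hval : ∀ j, j < x.length → x[j]? = some (W (i + j)) := by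
    intro j hj
    conv_lhs => rw [hx]
    simp [List.getElem?_map, List.getElem?_range, hj]
  have hQ : HmorAux.QP W k := by
    refine ⟨i, fun j hj => ?_⟩
    have hp := hper j (by omega)
    rw [hval j (by omega), hval (j + q) (by omega)] at hp
    have := Option.some.inj hp
    rw [this]
    congr 1
    omega
  obtain ⟨ii, a, ha, he⟩ := HmorAux.mainQP W hW k (by omega) hQ
  refine ⟨ii, 3 * a, by omega, ?_⟩
  rw [hplen, he]
  ring
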